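/- Let L be the ℂ-vector space with basis {e_r : r ∈ G} for an abelian subgroup G of ℤ^d, and let u ∈ ℂ^d. Then the bracket [e_r, e_{r'}] = (u | r' − r) e_{r+r'} defines a Lie algebra structure on L (bilinear, alternating, satisfying the Jacobi identity), where (u|v) = ∑ u_i v_i. -/

import Mathlib

open Finset

/-- The pairing (u | v) = ∑ u_i v_i for u ∈ ℂ^d and v ∈ G ≤ ℤ^d. -/
noncomputable def pairCZ {d : ℕ} (u : Fin d → ℂ) (v : Fin d → ℤ) : ℂ :=
  ∑ i, u i * (v i : ℂ)

lemma pairCZ_sub {d : ℕ} (u : Fin d → ℂ) (v w : Fin d → ℤ) :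
    pairCZ u (v - w) = pairCZ u v - pairCZ u w := by
  simp only [pairCZ, ← Finset.sum_sub_distrib]
  refine Finset.sum_congr rfl fun i _ => ?_
  simp only [Pi.sub_apply]
  push_cast
  ring

lemma pairCZ_add {d : ℕ} (u : Fin d → ℂ) (v w : Fin d → ℤ) :
    pairCZ u (v + w) = pairCZ u v + pairCZ u w := by
  simp only [pairCZ, ← Finset.sum_add_distrib]
  refine Finset.sum_congr rfl fun i _ => ?_
  simp only [Pi.add_apply]
  push_cast
  ring

/-- On the ℂ-vector space with basis {e_r : r ∈ G}, the bracket
[e_r, e_{r'}] = (u | r' − r) e_{r+r'} is alternating and satisfies the Jacobi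
identity, hence defines a Lie algebra structure. -/
theorem stmt11 {d : ℕ} (G : AddSubgroup (Fin d → ℤ)) (u : Fin d → ℂ)
    (br : (G →₀ ℂ) →ₗ[ℂ] (G →₀ ℂ) →ₗ[ℂ] (G →₀ ℂ))
    (hbr : ∀ r r' : G,
      br (Finsupp.single r 1) (Finsupp.single r' 1)
        = pairCZ u ((r' : Fin d → ℤ) - (r : Fin d → ℤ)) • Finsupp.single (r + r') 1) :
    (∀ x, br x x = 0) ∧
    (∀ x y z, br x (br y z) + br y (br z x) + br z (br x y) = 0) := by
  set f : G → ℂ := fun r => pairCZ u (r : Fin d → ℤ) with hf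
  have hfadd : ∀ a b : G, f (a + b) = f a + f b := by
    intro a b
    simp only [hf, AddSubgroup.coe_add, pairCZ_add]
  have hbr' : ∀ r r' : G, br (Finsupp.single r 1) (Finsupp.single r' 1)
      = (f r' - f r) • Finsupp.single (r + r') 1 := by
    intro r r'
    rw [hbr, ← pairCZ_sub]
  constructor
  · -- alternating
    have hanti : ∀ x y : G →₀ ℂ, br x y + br y x = 0 := by
      have h : br + br.flip = 0 := by
        apply Finsupp.lhom_ext'
        intro r
        apply LinearMap.ext_ring
        apply Finsupp.lhom_ext'
        intro r'
        apply LinearMap.ext_ring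
        simp only [LinearMap.comp_apply, LinearMap.add_apply, LinearMap.flip_apply,
          LinearMap.zero_apply, Finsupp.lsingle_apply, one_smul]
        rw [hbr' r r', hbr' r' r, add_comm r' r, ← add_smul]
        have : (f r' - f r) + (f r - f r') = 0 := by ring
        rw [this, zero_smul]
      intro x y
      have := LinearMap.congr_fun (LinearMap.congr_fun h x) y
      simpa using this
    intro x
    have h2 : (2 : ℂ) • br x x = 0 := by
      rw [two_smul]; exact hanti x x
    rcases smul_eq_zero.mp h2 with h | h
    · norm_num at h
    · exact h
  · -- Jacobi
    have hsingle : ∀ r s t : G,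
        br (Finsupp.single r 1) (br (Finsupp.single s 1) (Finsupp.single t 1))
        + br (Finsupp.single s 1) (br (Finsupp.single t 1) (Finsupp.single r 1))
        + br (Finsupp.single t 1) (br (Finsupp.single r 1) (Finsupp.single s 1)) = 0 := by
      intro r s t
      rw [hbr' s t, hbr' t r, hbr' r s, map_smul, map_smul, map_smul,
        hbr' r (s + t), hbr' s (t + r), hbr' t (r + s), smul_smul, smul_smul, smul_smul,
        show s + (t + r) = r + (s + t) by abel, show t + (r + s) = r + (s + t) by abel,
        ← add_smul, ← add_smul]
      have : (f t - f s) * (f (s + t) - f r) + (f r - f t) * (f (t + r) - f s)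
          + (f s - f r) * (f (r + s) - f t) = 0 := by
        rw [hfadd, hfadd, hfadd]; ring
      rw [this, zero_smul]
    intro x y z
    induction x using Finsupp.induction_linear with
    | zero => simp
    | add a b ha hb =>
      simp only [map_add, LinearMap.add_apply] at *
      have h := congrArg₂ (· + ·) ha hb
      simp only [add_zero] at h
      rw [← h]; abel
    | single r bx =>
      induction y using Finsupp.induction_linear with
      | zero => simp
      | add a b ha hb =>
        simp only [map_add, LinearMap.add_apply] at *
        have h := congrArg₂ (· + ·) ha hb
        simp only [add_zero] at h
        rw [← h]; abel
      | single s by' =>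
        induction z using Finsupp.induction_linear with
        | zero => simp
        | add a b ha hb =>
          simp only [map_add, LinearMap.add_apply] at *
          have h := congrArg₂ (· + ·) ha hb
          simp only [add_zero] at h
          rw [← h]; abel
        | single t bz =>
          rw [← Finsupp.smul_single_one r bx, ← Finsupp.smul_single_one s by',
            ← Finsupp.smul_single_one t bz]
          simp only [map_smul, LinearMap.smul_apply, smul_smul]
          rw [show bz * by' * bx = bx * by' * bz by ring,
            show bx * bz * by' = bx * by' * bz by ring,
            show by' * bx * bz = bx * by' * bz by ring,
            ← smul_add, ← smul_add, hsingle, smul_zero]
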